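/- Let T : ℝ₊^N → ℝ₊₊^N be continuous and concave (each coordinate function concave on ℝ₊^N), and let x* ∈ ℝ₊^N satisfy T(x*) = x*. For each d ∈ ℝ₊^N the function t ↦ T(td)/t is coordinatewise nonincreasing on (0,∞), so the asymptotic mapping S(d) := lim_{t→∞} T(td)/t exists in ℝ₊^N. Suppose v ∈ ℝ₊^N \ {0} and ρ ∈ [0,1) satisfy S(v) = ρv. Then for every ε > 0 with x* ≥ εv and every n ≥ 1, the n-fold iterate of T satisfies T^n(x* − εv) ≤ x* − ρ^n ε v. -/

import Mathlib

open Filter Topology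

/-- Let `T : ℝ₊^N → ℝ₊₊^N` be continuous and concave with fixed point `x*`, let `S` be
its asymptotic mapping (given via the `Tendsto` hypothesis `S(d) = lim_{t→∞} T(td)/t`),
and suppose `S(v) = ρv` for some `v ∈ ℝ₊^N \ {0}` and `ρ ∈ [0,1)`. Then for every
`ε > 0` with `x* ≥ εv` and every `n ≥ 1`: `T^n(x* − εv) ≤ x* − ρ^n ε v`. -/
theorem stmt_12 (N : ℕ) (hN : 1 ≤ N)
    (T : (Fin N → ℝ) → (Fin N → ℝ))
    (hT_pos : ∀ x : Fin N → ℝ, (∀ i, 0 ≤ x i) → ∀ i, 0 < T x i)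
    (hT_cont : ContinuousOn T {x : Fin N → ℝ | ∀ i, 0 ≤ x i})
    (hT_conc : ∀ i : Fin N, ConcaveOn ℝ {x : Fin N → ℝ | ∀ j, 0 ≤ x j} (fun x => T x i))
    (xstar : Fin N → ℝ) (hxstar : ∀ i, 0 ≤ xstar i)
    (hfix : T xstar = xstar)
    (S : (Fin N → ℝ) → (Fin N → ℝ))
    (hS : ∀ d : Fin N → ℝ, (∀ i, 0 ≤ d i) →
      Tendsto (fun t : ℝ => t⁻¹ • T (t • d)) atTop (𝓝 (S d)))
    (v : Fin N → ℝ) (hv_nonneg : ∀ i, 0 ≤ v i) (hv_ne : v ≠ 0)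
    (ρ : ℝ) (hρ0 : 0 ≤ ρ) (hρ1 : ρ < 1) (heig : S v = ρ • v) :
    ∀ ε : ℝ, 0 < ε → ε • v ≤ xstar → ∀ n : ℕ, 1 ≤ n →
      T^[n] (xstar - ε • v) ≤ xstar - (ρ ^ n * ε) • v := by
  -- T is nondecreasing on the nonnegative cone
  have hmono : ∀ x y : Fin N → ℝ, (∀ i, 0 ≤ x i) → (∀ i, 0 ≤ y i) → x ≤ y → T x ≤ T y := by
    intro x y hx hy hxy i
    have key : ∀ t : ℝ, 0 ≤ t → (t / (1 + t)) * T x i ≤ T y i := by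
      intro t ht
      have h1t : (0:ℝ) < 1 + t := by linarith
      have hz : (y + t • (y - x)) ∈ {x : Fin N → ℝ | ∀ j, 0 ≤ x j} := by
        intro j
        have h1 := hxy j
        have h2 := hy j
        simp only [Pi.add_apply, Pi.smul_apply, Pi.sub_apply, smul_eq_mul]
        nlinarith
      have hxmem : x ∈ {x : Fin N → ℝ | ∀ j, 0 ≤ x j} := hx
      have ha : (0:ℝ) ≤ 1 / (1 + t) := by positivity
      have hb : (0:ℝ) ≤ t / (1 + t) := by positivity
      have hab : 1 / (1 + t) + t / (1 + t) = 1 := by field_simp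
      have hcomb := (hT_conc i).2 hz hxmem ha hb hab
      have hpt : (1 / (1 + t)) • (y + t • (y - x)) + (t / (1 + t)) • x = y := by
        funext j
        simp only [Pi.add_apply, Pi.smul_apply, Pi.sub_apply, smul_eq_mul]
        field_simp
        ring
      rw [hpt] at hcomb
      have hz0 : 0 ≤ T (y + t • (y - x)) i := (hT_pos _ hz i).le
      have : (0:ℝ) ≤ (1 / (1 + t)) * T (y + t • (y - x)) i := by positivity
      simp only [smul_eq_mul] at hcomb
      linarith
    have hlim : Tendsto (fun t : ℝ => (t / (1 + t)) * T x i) atTop (𝓝 (T x i)) := by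
      have h1 : Tendsto (fun t : ℝ => t / (1 + t)) atTop (𝓝 1) := by
        have h2 : Tendsto (fun t : ℝ => (1 + t⁻¹)⁻¹) atTop (𝓝 1) := by
          have := (tendsto_const_nhds.add tendsto_inv_atTop_zero :
            Tendsto (fun t : ℝ => 1 + t⁻¹) atTop (𝓝 (1 + 0)))
          have h3 := this.inv₀ (by norm_num)
          simpa using h3
        refine h2.congr' ?_
        filter_upwards [eventually_gt_atTop (0:ℝ)] with t ht
        have ht' : t ≠ 0 := ht.ne'
        have h1t : (1:ℝ) + t ≠ 0 := by positivity
        have hrw : 1 + t⁻¹ = (1 + t) / t := by field_simp; ring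
        rw [hrw, inv_div]
      simpa using h1.mul_const (T x i)
    refine le_of_tendsto hlim ?_
    filter_upwards [eventually_ge_atTop (0:ℝ)] with t ht using key t ht
  -- key one-step contraction lemma
  have hkey : ∀ ε' : ℝ, 0 < ε' → ε' • v ≤ xstar →
      T (xstar - ε' • v) ≤ xstar - (ρ * ε') • v := by
    intro ε' hε' hle i
    have hxs : xstar ∈ {x : Fin N → ℝ | ∀ j, 0 ≤ x j} := hxstar
    have hbase : (xstar - ε' • v) ∈ {x : Fin N → ℝ | ∀ j, 0 ≤ x j} := by
      intro j
      have := hle j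
      simp only [Pi.sub_apply, Pi.smul_apply, smul_eq_mul] at *
      linarith
    set u : ℝ → ℝ := fun l => (2 * l * ε') * (1 - l)⁻¹ with hu_def
    have hu_tendsto : Tendsto u (𝓝[<] (1:ℝ)) atTop := by
      have hnum : Tendsto (fun l : ℝ => 2 * l * ε') (𝓝[<] (1:ℝ)) (𝓝 (2 * 1 * ε')) := by
        have hid : Tendsto (fun l : ℝ => l) (𝓝[<] (1:ℝ)) (𝓝 1) :=
          tendsto_id.mono_right nhdsWithin_le_nhds
        exact (hid.const_mul 2).mul_const ε'
      have hden : Tendsto (fun l : ℝ => (1 - l)⁻¹) (𝓝[<] (1:ℝ)) atTop := by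
        have hsub : Tendsto (fun l : ℝ => 1 - l) (𝓝[<] (1:ℝ)) (𝓝[>] (0:ℝ)) := by
          rw [tendsto_nhdsWithin_iff]
          constructor
          · have hid : Tendsto (fun l : ℝ => l) (𝓝[<] (1:ℝ)) (𝓝 1) :=
              tendsto_id.mono_right nhdsWithin_le_nhds
            simpa using (tendsto_const_nhds.sub hid :
              Tendsto (fun l : ℝ => 1 - l) (𝓝[<] (1:ℝ)) (𝓝 (1 - 1)))
          · filter_upwards [self_mem_nhdsWithin] with l hl
            simp only [Set.mem_Iio] at hl
            simp only [Set.mem_Ioi]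
            linarith
        exact tendsto_inv_nhdsGT_zero.comp hsub
      exact hnum.pos_mul_atTop (by positivity) hden
    have hSv := hS v hv_nonneg
    rw [heig] at hSv
    have hlim2 : Tendsto (fun l : ℝ => (u l)⁻¹ • T (u l • v)) (𝓝[<] (1:ℝ)) (𝓝 (ρ • v)) :=
      hSv.comp hu_tendsto
    have hlim_i : Tendsto (fun l : ℝ => (u l)⁻¹ * T (u l • v) i) (𝓝[<] (1:ℝ)) (𝓝 (ρ * v i)) := by
      have := (tendsto_pi_nhds.1 hlim2) i
      simpa [Pi.smul_apply, smul_eq_mul] using this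
    have hB : Tendsto (fun l : ℝ => xstar i / l - ε' * ((u l)⁻¹ * T (u l • v) i))
        (𝓝[<] (1:ℝ)) (𝓝 (xstar i - ε' * (ρ * v i))) := by
      have hid : Tendsto (fun l : ℝ => l) (𝓝[<] (1:ℝ)) (𝓝 1) :=
        tendsto_id.mono_right nhdsWithin_le_nhds
      have h1 : Tendsto (fun l : ℝ => xstar i / l) (𝓝[<] (1:ℝ)) (𝓝 (xstar i)) := by
        have := (tendsto_const_nhds :
          Tendsto (fun _ : ℝ => xstar i) (𝓝[<] (1:ℝ)) (𝓝 (xstar i))).div hid one_ne_zero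
        simpa [Pi.div_def] using this
      exact h1.sub (hlim_i.const_mul ε')
    have hev : ∀ᶠ l in 𝓝[<] (1:ℝ),
        T (xstar - ε' • v) i ≤ xstar i / l - ε' * ((u l)⁻¹ * T (u l • v) i) := by
      filter_upwards [Ioo_mem_nhdsLT_of_mem
        (by norm_num : (1:ℝ) ∈ Set.Ioc (1/2 : ℝ) 1)] with l hl
      obtain ⟨hl0, hl1⟩ := hl
      have hl0' : (0:ℝ) < l := by linarith
      have h1l : (0:ℝ) < 1 - l := by linarith
      have hu_pos : 0 < u l := by
        rw [hu_def]; positivity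
      have huv : (u l • v) ∈ {x : Fin N → ℝ | ∀ j, 0 ≤ x j} := by
        intro j
        simp only [Pi.smul_apply, smul_eq_mul]
        exact mul_nonneg hu_pos.le (hv_nonneg j)
      have h2x : ((2:ℝ) • xstar) ∈ {x : Fin N → ℝ | ∀ j, 0 ≤ x j} := by
        intro j
        simp only [Pi.smul_apply, smul_eq_mul]
        linarith [hxstar j]
      -- Step A:  T(x* + (u/2) v) ≥ (1/2) T(u v)
      have hA := (hT_conc i).2 huv h2x (by norm_num : (0:ℝ) ≤ 1/2)
        (by norm_num : (0:ℝ) ≤ 1/2) (by norm_num)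
      have hPdef : (1/2 : ℝ) • (u l • v) + (1/2 : ℝ) • ((2:ℝ) • xstar)
          = xstar + (u l / 2) • v := by
        funext j
        simp only [Pi.add_apply, Pi.smul_apply, smul_eq_mul]
        ring
      rw [hPdef] at hA
      have hPmem : (xstar + (u l / 2) • v) ∈ {x : Fin N → ℝ | ∀ j, 0 ≤ x j} := by
        intro j
        simp only [Pi.add_apply, Pi.smul_apply, smul_eq_mul]
        have := hv_nonneg j
        have := hxstar j
        nlinarith
      have h2xpos : 0 ≤ T ((2:ℝ) • xstar) i := (hT_pos _ h2x i).le
      -- Step B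
      have hB2 := (hT_conc i).2 hbase hPmem hl0'.le h1l.le (by ring)
      have hcomb : l • (xstar - ε' • v) + (1 - l) • (xstar + (u l / 2) • v) = xstar := by
        funext j
        simp only [Pi.add_apply, Pi.sub_apply, Pi.smul_apply, smul_eq_mul, hu_def]
        field_simp
        ring
      rw [hcomb] at hB2
      simp only [smul_eq_mul] at hA hB2
      rw [hfix] at hB2
      -- from hA :  (1/2) T(uv) i + (1/2) T(2x*) i ≤ T(x* + (u/2)v) i
      -- from hB2 : l * T(x* - ε'v) i + (1-l) * T(x* + (u/2)v) i ≤ xstar i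
      have hstepA : (1/2 : ℝ) * T (u l • v) i ≤ T (xstar + (u l / 2) • v) i := by linarith
      have hfinal : l * T (xstar - ε' • v) i
          ≤ xstar i - (1 - l) * ((1/2 : ℝ) * T (u l • v) i) := by
        nlinarith [(hT_pos _ hPmem i).le]
      have hcoef : (1 - l) * (1/2 : ℝ) = l * ε' * (u l)⁻¹ := by
        rw [hu_def]
        field_simp
      have hlne : l ≠ 0 := hl0'.ne'
      have h2' : l * T (xstar - ε' • v) i
          ≤ l * (xstar i / l - ε' * ((u l)⁻¹ * T (u l • v) i)) := by
        have hrhs : l * (xstar i / l - ε' * ((u l)⁻¹ * T (u l • v) i))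
            = xstar i - (1 - l) * ((1/2 : ℝ) * T (u l • v) i) := by
          rw [show (1 - l) * ((1/2 : ℝ) * T (u l • v) i)
            = ((1 - l) * (1/2 : ℝ)) * T (u l • v) i by ring, hcoef]
          field_simp
        rw [hrhs]
        exact hfinal
      exact le_of_mul_le_mul_left h2' hl0'
    have := ge_of_tendsto hB hev
    simp only [Pi.sub_apply, Pi.smul_apply, smul_eq_mul]
    linarith
  -- iterate
  intro ε hε hεv n hn
  -- strengthened induction
  have main : ∀ n : ℕ, 1 ≤ n →
      (∀ i, 0 ≤ T^[n] (xstar - ε • v) i) ∧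
      T^[n] (xstar - ε • v) ≤ xstar - (ρ ^ n * ε) • v := by
    intro n hn
    induction n with
    | zero => omega
    | succ m ih =>
      have hbase : ∀ j, 0 ≤ (xstar - ε • v) j := by
        intro j
        have := hεv j
        simp only [Pi.sub_apply, Pi.smul_apply, smul_eq_mul] at *
        linarith
      rcases Nat.eq_zero_or_pos m with hm | hm
      · subst hm
        constructor
        · intro i
          simp only [zero_add, Function.iterate_one]
          exact (hT_pos _ hbase i).le
        · simp only [zero_add, Function.iterate_one, pow_one]
          exact hkey ε hε hεv
      · obtain ⟨ihpos, ihle⟩ := ih hm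
        have hnext : ∀ i, 0 ≤ T^[m+1] (xstar - ε • v) i := by
          intro i
          rw [Function.iterate_succ_apply']
          exact (hT_pos _ ihpos i).le
        refine ⟨hnext, ?_⟩
        rw [Function.iterate_succ_apply']
        have hρmε_le : (ρ ^ m * ε) • v ≤ xstar := by
          intro j
          have h1 := hεv j
          have h2 := hv_nonneg j
          simp only [Pi.smul_apply, smul_eq_mul] at *
          have hρm : ρ ^ m ≤ 1 := pow_le_one₀ hρ0 hρ1.le
          nlinarith [pow_nonneg hρ0 m, mul_nonneg hε.le h2]
        have htarget_nonneg : ∀ j, 0 ≤ (xstar - (ρ ^ m * ε) • v) j := by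
          intro j
          have := hρmε_le j
          simp only [Pi.sub_apply, Pi.smul_apply, smul_eq_mul] at *
          linarith
        have hstep1 : T (T^[m] (xstar - ε • v)) ≤ T (xstar - (ρ ^ m * ε) • v) :=
          hmono _ _ ihpos htarget_nonneg ihle
        rcases eq_or_lt_of_le hρ0 with hρz | hρpos
        · -- ρ = 0
          have hρm0 : ρ ^ m = 0 := by
            rw [← hρz]; exact zero_pow (by omega)
          have h0 : xstar - (ρ ^ m * ε) • v = xstar := by
            rw [hρm0]
            simp
          refine le_trans hstep1 ?_
          rw [h0, hfix]
          have hρm1 : ρ ^ (m+1) = 0 := by rw [← hρz]; exact zero_pow (by omega)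
          rw [hρm1]
          simp
        · -- ρ > 0
          have hstep2 : T (xstar - (ρ ^ m * ε) • v) ≤ xstar - (ρ * (ρ ^ m * ε)) • v :=
            hkey (ρ ^ m * ε) (by positivity) hρmε_le
          refine le_trans hstep1 (le_trans hstep2 ?_)
          intro j
          simp only [Pi.sub_apply, Pi.smul_apply, smul_eq_mul]
          have : ρ * (ρ ^ m * ε) = ρ ^ (m+1) * ε := by ring
          rw [this]
  exact (main n hn).2
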